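/- The map φ : G₁ → G × G given by φ(g) = (φ_L(g), φ_R(g)) is an injective group homomorphism. -/

import Mathlib

/-- The generator `a = (1,1)α` of the Grigorchuk group, acting on vertex
addresses `List Bool` of the rooted binary tree. -/
def ga : List Bool → List Bool
  | [] => []
  | x :: s => (!x) :: s

mutual
  /-- The generator `b = (a,c)`. -/
  def gb : List Bool → List Bool
    | [] => []
    | false :: s => false :: ga s
    | true :: s => true :: gc s
  /-- The generator `c = (a,d)`. -/
  def gc : List Bool → List Bool
    | [] => []
    | false :: s => false :: ga s
    | true :: s => true :: gd s
  /-- The generator `d = (1,b)`. -/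
  def gd : List Bool → List Bool
    | [] => []
    | false :: s => false :: s
    | true :: s => true :: gb s
end

/-- The Grigorchuk group `G = ⟨a,b,c,d⟩`, as the submonoid of the endomorphism
monoid of the tree generated by `a, b, c, d` (since these are involutions, this
submonoid is the Grigorchuk group). -/
def Grig : Submonoid (Function.End (List Bool)) :=
  Submonoid.closure {ga, gb, gc, gd}

/-- `f` fixes the first level of the tree. The elements of `Grig` satisfying
this form the level-1 stabiliser `G₁`. -/
def FixesLevelOne (f : Function.End (List Bool)) : Prop :=
  ∀ (x : Bool) (s : List Bool), ∃ s' : List Bool, f (x :: s) = x :: s'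

/-- The left section `φ_L(f)`: the automorphism induced on the left subtree. -/
def sectL (f : Function.End (List Bool)) : Function.End (List Bool) :=
  fun s => (f (false :: s)).tail

/-- The right section `φ_R(f)`: the automorphism induced on the right subtree. -/
def sectR (f : Function.End (List Bool)) : Function.End (List Bool) :=
  fun s => (f (true :: s)).tail

/-- uniform section -/
def sect (x : Bool) (f : Function.End (List Bool)) : Function.End (List Bool) :=
  fun s => (f (x :: s)).tail

def Good (f : Function.End (List Bool)) : Prop :=
  ∃ e : Bool, (∀ x, sect x f ∈ Grig) ∧
    ∀ (x : Bool) (s : List Bool), f (x :: s) = (xor e x) :: sect x f s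

lemma ga_mem : ga ∈ Grig := Submonoid.subset_closure (by exact Or.inl rfl)
lemma gb_mem : gb ∈ Grig := Submonoid.subset_closure (by exact Or.inr (Or.inl rfl))
lemma gc_mem : gc ∈ Grig := Submonoid.subset_closure (by exact Or.inr (Or.inr (Or.inl rfl)))
lemma gd_mem : gd ∈ Grig := Submonoid.subset_closure (by exact Or.inr (Or.inr (Or.inr rfl)))

lemma good_one : Good 1 := by
  refine ⟨false, fun x => ?_, fun x s => by cases x <;> rfl⟩
  have : sect x (1 : Function.End (List Bool)) = 1 := by
    funext s; rfl
  rw [this]; exact one_mem _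

lemma good_ga : Good ga := by
  refine ⟨true, fun x => ?_, fun x s => by cases x <;> rfl⟩
  have : sect x ga = 1 := by funext s; cases x <;> rfl
  rw [this]; exact one_mem _

lemma good_gb : Good gb := by
  refine ⟨false, fun x => ?_, fun x s => by cases x <;> rfl⟩
  cases x
  · have : sect false gb = ga := by funext s; rfl
    rw [this]; exact ga_mem
  · have : sect true gb = gc := by funext s; rfl
    rw [this]; exact gc_mem

lemma good_gc : Good gc := by
  refine ⟨false, fun x => ?_, fun x s => by cases x <;> rfl⟩
  cases x
  · have : sect false gc = ga := by funext s; rfl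
    rw [this]; exact ga_mem
  · have : sect true gc = gd := by funext s; rfl
    rw [this]; exact gd_mem

lemma good_gd : Good gd := by
  refine ⟨false, fun x => ?_, fun x s => by cases x <;> rfl⟩
  cases x
  · have : sect false gd = 1 := by funext s; rfl
    rw [this]; exact one_mem _
  · have : sect true gd = gb := by funext s; rfl
    rw [this]; exact gb_mem

lemma good_mul {f g : Function.End (List Bool)} (hf : Good f) (hg : Good g) :
    Good (f * g) := by
  obtain ⟨ef, hfm, hfe⟩ := hf
  obtain ⟨eg, hgm, hge⟩ := hg
  have hsect : ∀ x, sect x (f * g) = sect (xor eg x) f * sect x g := by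
    intro x; funext s
    show (f (g (x :: s))).tail = _
    rw [hge x s, hfe (xor eg x) (sect x g s)]
    rfl
  refine ⟨xor ef eg, fun x => ?_, fun x s => ?_⟩
  · rw [hsect x]; exact mul_mem (hfm _) (hgm _)
  · show f (g (x :: s)) = _
    rw [hge x s, hfe (xor eg x) (sect x g s), hsect x]
    have : xor ef (xor eg x) = xor (xor ef eg) x := by
      cases ef <;> cases eg <;> cases x <;> rfl
    rw [this]; rfl

lemma grig_good : ∀ f ∈ Grig, Good f := by
  intro f hf
  induction hf using Submonoid.closure_induction with
  | mem x hx =>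
    rcases hx with h | h | h | h <;> subst h
    · exact good_ga
    · exact good_gb
    · exact good_gc
    · exact good_gd
  | one => exact good_one
  | mul x y _ _ hx hy => exact good_mul hx hy

lemma grig_nil : ∀ f ∈ Grig, f [] = [] := by
  intro f hf
  induction hf using Submonoid.closure_induction with
  | mem x hx => rcases hx with h | h | h | h <;> subst h <;> rfl
  | one => rfl
  | mul x y _ _ hx hy => show x (y []) = []; rw [hy, hx]


/-- the map `φ = (φ_L, φ_R) : G₁ → G × G` is a well-defined
injective group homomorphism: the sections of an element of `G₁` again lie in
`G`, `φ` is multiplicative, and `φ` is injective. -/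
theorem stmt_10 :
    (∀ f ∈ Grig, FixesLevelOne f → sectL f ∈ Grig ∧ sectR f ∈ Grig) ∧
    (∀ f ∈ Grig, ∀ g ∈ Grig, FixesLevelOne f → FixesLevelOne g →
      sectL (f * g) = sectL f * sectL g ∧ sectR (f * g) = sectR f * sectR g) ∧
    (∀ f ∈ Grig, ∀ g ∈ Grig, FixesLevelOne f → FixesLevelOne g →
      sectL f = sectL g → sectR f = sectR g → f = g) := by
  refine ⟨?_, ?_, ?_⟩
  · intro f hf _
    obtain ⟨e, hm, _⟩ := grig_good f hf
    exact ⟨hm false, hm true⟩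
  · intro f hf g hg hFf hFg
    constructor
    · funext s
      obtain ⟨s', hs'⟩ := hFg false s
      have hsg : sectL g s = s' := by simp [sectL, hs']
      show (f (g (false :: s))).tail = sectL f (sectL g s)
      rw [hs', hsg]; rfl
    · funext s
      obtain ⟨s', hs'⟩ := hFg true s
      have hsg : sectR g s = s' := by simp [sectR, hs']
      show (f (g (true :: s))).tail = sectR f (sectR g s)
      rw [hs', hsg]; rfl
  · intro f hf g hg hFf hFg hL hR
    funext l
    cases l with
    | nil => rw [grig_nil f hf, grig_nil g hg]
    | cons x s =>
      obtain ⟨s1, h1⟩ := hFf x s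
      obtain ⟨s2, h2⟩ := hFg x s
      cases x
      · have := congrFun hL s
        simp only [sectL, h1, h2, List.tail_cons] at this
        rw [h1, h2, this]
      · have := congrFun hR s
        simp only [sectR, h1, h2, List.tail_cons] at this
        rw [h1, h2, this]
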